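/- (Hilbert 90 for GL_n) Let L/k be a finite Galois extension with Galois group G acting entrywise on GL_n(L). Then every 1-cocycle ν : G → GL_n(L) is a coboundary: there exists a ∈ GL_n(L) such that ν(σ) = a⁻¹ · σ(a) for all σ ∈ G. Equivalently, H¹(G, GL_n(L)) is trivial. -/

import Mathlib

/-- The entrywise action of a Galois automorphism on `GL_n(L)`. -/
def galGL (k L : Type) [Field k] [Field L] [Algebra k L] (n : ℕ) (σ : L ≃ₐ[k] L) :
    GL (Fin n) L →* GL (Fin n) L :=
  Units.map ((RingHom.mapMatrix (σ : L →+* L)).toMonoidHom)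

section aux
variable {k L : Type} [Field k] [Field L] [Algebra k L] {n : ℕ}

lemma galGL_coe (σ : L ≃ₐ[k] L) (M : GL (Fin n) L) :
    ((galGL k L n σ M : GL (Fin n) L) : Matrix (Fin n) (Fin n) L) = M.1.map σ := rfl

lemma mapMatrix_mulVec (σ : L ≃ₐ[k] L) (A : Matrix (Fin n) (Fin n) L) (v : Fin n → L) :
    (A.map σ).mulVec (fun i => σ (v i)) = fun i => σ (A.mulVec v i) := by
  funext i
  simp [Matrix.mulVec, dotProduct, map_sum]

end aux

/-- Hilbert 90 for `GL_n`: for a finite Galois extension `L/k`, every 1-cocycle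
`ν : Gal(L/k) → GL_n(L)` is a coboundary, i.e. `H¹(Gal(L/k), GL_n(L))` is
trivial. -/
theorem hilbert90_GLn
    (k L : Type) [Field k] [Field L] [Algebra k L]
    [IsGalois k L] [FiniteDimensional k L] (n : ℕ)
    (ν : (L ≃ₐ[k] L) → GL (Fin n) L)
    (hν : ∀ σ τ : L ≃ₐ[k] L, ν (σ * τ) = ν σ * galGL k L n σ (ν τ)) :
    ∃ a : GL (Fin n) L, ∀ σ : L ≃ₐ[k] L, ν σ = a⁻¹ * galGL k L n σ a := by
  classical
  -- cocycle value at 1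
  have hν1 : ν 1 = 1 := by
    have h := hν 1 1
    rw [one_mul] at h
    have hgal : galGL k L n 1 (ν 1) = ν 1 := by
      apply Units.ext
      rw [galGL_coe]
      ext i j
      simp [Matrix.map_apply]
    rw [hgal] at h
    exact mul_left_cancel (a := ν 1) (by rw [mul_one, ← h])
  -- the matrix-level cocycle identity
  have hνmat : ∀ σ τ : L ≃ₐ[k] L,
      ((ν (σ * τ) : GL (Fin n) L) : Matrix (Fin n) (Fin n) L)
        = (ν σ : Matrix (Fin n) (Fin n) L) * (ν τ : Matrix (Fin n) (Fin n) L).map σ := by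
    intro σ τ
    rw [hν σ τ, Units.val_mul, galGL_coe]
  -- the set of "twisted-fixed" vectors
  set W : Set (Fin n → L) :=
    {w | ∀ σ : L ≃ₐ[k] L, ((ν σ : Matrix (Fin n) (Fin n) L)).mulVec (fun i => σ (w i)) = w}
    with hW
  -- averaged vectors lie in W
  have hmem : ∀ (x : L) (v : Fin n → L),
      (∑ σ : L ≃ₐ[k] L, σ x • ((ν σ : Matrix (Fin n) (Fin n) L)).mulVec (fun i => σ (v i))) ∈ W := by
    intro x v
    intro τ
    have habs : ∀ σ : L ≃ₐ[k] L, (fun i => (τ * σ) (v i)) = fun i => τ (σ (v i)) := by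
      intro σ; funext i; simp
    have key : (fun i => τ ((∑ σ : L ≃ₐ[k] L,
        σ x • ((ν σ : Matrix (Fin n) (Fin n) L)).mulVec (fun i => σ (v i))) i))
        = ∑ σ : L ≃ₐ[k] L, (τ (σ x)) •
            ((ν σ : Matrix (Fin n) (Fin n) L).map τ).mulVec (fun i => (τ * σ) (v i)) := by
      funext i
      rw [Finset.sum_apply, map_sum, Finset.sum_apply]
      refine Finset.sum_congr rfl fun σ _ => ?_
      have h1 := congrFun (mapMatrix_mulVec (k := k) τ
        ((ν σ : Matrix (Fin n) (Fin n) L)) (fun i => σ (v i))) i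
      rw [habs σ]
      simp only [Pi.smul_apply, smul_eq_mul, map_mul, h1]
    rw [key, ← Matrix.mulVecLin_apply, map_sum]
    simp only [map_smul, Matrix.mulVecLin_apply]
    have step : ∀ σ : L ≃ₐ[k] L,
        (τ (σ x)) • ((ν τ : Matrix (Fin n) (Fin n) L)).mulVec
          (((ν σ : Matrix (Fin n) (Fin n) L).map τ).mulVec (fun i => (τ * σ) (v i)))
        = ((τ * σ) x) • ((ν (τ * σ) : Matrix (Fin n) (Fin n) L)).mulVec
            (fun i => (τ * σ) (v i)) := by
      intro σ
      rw [Matrix.mulVec_mulVec, ← hνmat]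
      rfl
    simp_rw [step]
    exact Fintype.sum_equiv (Equiv.mulLeft τ) _ _ (fun σ => rfl)
  -- W spans everything
  have hspan : Submodule.span L W = ⊤ := by
    by_contra hne
    obtain ⟨f, hf0, hfker⟩ := Submodule.exists_dual_map_eq_bot_of_lt_top
      (lt_top_iff_ne_top.2 hne) inferInstance
    have hfW : ∀ w ∈ W, f w = 0 := by
      intro w hw
      have : f w ∈ Submodule.map f (Submodule.span L W) :=
        Submodule.mem_map_of_mem (Submodule.subset_span hw)
      rw [hfker] at this
      exact (Submodule.mem_bot L).1 this
    -- linear independence of characters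
    have hli : LinearIndependent L
        (fun σ : L ≃ₐ[k] L => ((σ : L →* L) : L → L)) := by
      have h1 := linearIndependent_monoidHom L L
      exact h1.comp (fun σ : L ≃ₐ[k] L => (σ : L →* L))
        (fun σ τ h => by
          ext x
          exact DFunLike.congr_fun h x)
    have hzero : ∀ (v : Fin n → L) (σ : L ≃ₐ[k] L),
        f (((ν σ : Matrix (Fin n) (Fin n) L)).mulVec (fun i => σ (v i))) = 0 := by
      intro v
      have hsum : ∀ x : L, ∑ σ : L ≃ₐ[k] L,
          σ x * f (((ν σ : Matrix (Fin n) (Fin n) L)).mulVec (fun i => σ (v i))) = 0 := by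
        intro x
        have := hfW _ (hmem x v)
        rw [map_sum] at this
        simpa [mul_comm] using this
      have := Fintype.linearIndependent_iff.1 hli
        (fun σ => f (((ν σ : Matrix (Fin n) (Fin n) L)).mulVec (fun i => σ (v i))))
        (by
          funext x
          have := hsum x
          simpa [mul_comm] using this)
      exact this
    refine hf0 (LinearMap.ext fun v => ?_)
    have := hzero v 1
    simpa [hν1, Matrix.one_mulVec] using this
  -- pick a basis inside W
  obtain ⟨s, hsW, hsspan, hsli⟩ := exists_linearIndependent L W
  rw [hspan] at hsspan
  haveI : FiniteDimensional L (Fin n → L) := inferInstance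
  have hsfin : s.Finite := LinearIndependent.setFinite hsli
  haveI := hsfin.fintype
  let b : Module.Basis s L (Fin n → L) := Module.Basis.mk hsli (by rw [Subtype.range_coe, hsspan])
  have hcard : Fintype.card s = n := by
    have h1 := Module.finrank_eq_card_basis b
    rw [Module.finrank_fin_fun] at h1
    exact h1.symm
  let e : s ≃ Fin n := Fintype.equivFinOfCardEq hcard
  let b' : Module.Basis (Fin n) L (Fin n → L) := b.reindex e
  have hb'W : ∀ j, b' j ∈ W := by
    intro j
    have : b' j = ((e.symm j : s) : Fin n → L) := by
      simp [b', b, Module.Basis.mk_apply]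
    rw [this]
    exact hsW (e.symm j).2
  -- build the invertible matrix whose columns are the basis vectors
  let B : Matrix (Fin n) (Fin n) L := (Pi.basisFun L (Fin n)).toMatrix fun j => b' j
  have hBapply : ∀ i j, B i j = b' j i := by
    intro i j
    simp [B, Module.Basis.toMatrix_apply]
  haveI : Invertible B := Module.Basis.invertibleToMatrix (Pi.basisFun L (Fin n)) b'
  let Bu : GL (Fin n) L := unitOfInvertible B
  -- the key matrix equation
  have hfix : ∀ σ : L ≃ₐ[k] L,
      (ν σ : Matrix (Fin n) (Fin n) L) * B.map σ = B := by
    intro σ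
    ext i j
    have hcol := congrFun (hb'W j σ) i
    simp only [Matrix.mul_apply, Matrix.map_apply]
    simp only [Matrix.mulVec, dotProduct] at hcol
    calc ∑ r, (ν σ : Matrix (Fin n) (Fin n) L) i r * σ (B r j)
        = ∑ r, (ν σ : Matrix (Fin n) (Fin n) L) i r * σ (b' j r) := by
          simp_rw [hBapply]
      _ = b' j i := hcol
      _ = B i j := (hBapply i j).symm
  refine ⟨Bu⁻¹, fun σ => ?_⟩
  rw [inv_inv, map_inv]
  rw [eq_comm, mul_inv_eq_iff_eq_mul, eq_comm]
  apply Units.ext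
  rw [Units.val_mul, galGL_coe]
  exact hfix σ
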